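/- Let d ≥ 1 be an integer, δ > 0, and let g : [0,∞) → [0,∞) be a nonincreasing function. Let x₁,…,x_N be a δ-separated family of points in ℝ^d and let Φ be the symmetric N×N matrix with entries Φ_{ij} = g(‖x_i − x_j‖). Then every eigenvalue of Φ is at least g(0) − 10^d ∑_{m=1}^∞ m^{d−1} g(mδ). In particular, if 10^d ∑_{m=1}^∞ m^{d−1} g(mδ) < g(0), then Φ is positive definite with smallest eigenvalue bounded below by a positive constant depending only on g, δ and d, independently of N. -/

import Mathlib

open Metric MeasureTheory Module ENNReal

lemma aux_pow_sub_pow (a b : ℝ) (hb : 0 ≤ b) (hab : b ≤ a) :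
    ∀ n : ℕ, a ^ n - b ^ n ≤ n * (a - b) * a ^ (n - 1) := by
  intro n
  induction n with
  | zero => simp
  | succ n ih =>
    have ha : 0 ≤ a := hb.trans hab
    have h1 : a ^ (n + 1) - b ^ (n + 1) = a * (a ^ n - b ^ n) + b ^ n * (a - b) := by ring
    have h2 : b ^ n ≤ a ^ n := pow_le_pow_left₀ hb hab n
    rcases Nat.eq_zero_or_pos n with h | h
    · subst h; simp
    · have hn1 : n - 1 + 1 = n := Nat.succ_pred_eq_of_pos h
      calc a ^ (n + 1) - b ^ (n + 1) = a * (a ^ n - b ^ n) + b ^ n * (a - b) := h1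
        _ ≤ a * (n * (a - b) * a ^ (n - 1)) + a ^ n * (a - b) := by
            have := mul_le_mul_of_nonneg_left ih ha
            have h3 : b ^ n * (a - b) ≤ a ^ n * (a - b) :=
              mul_le_mul_of_nonneg_right h2 (by linarith)
            linarith
        _ = (n + 1) * (a - b) * a ^ n := by
            rw [show a * (↑n * (a - b) * a ^ (n - 1)) = ↑n * (a - b) * (a ^ (n-1) * a) by ring,
              ← pow_succ, hn1]; ring
        _ = (↑(n + 1)) * (a - b) * a ^ (n + 1 - 1) := by push_cast; simp

lemma aux_nat_le_pow (d : ℕ) (hd : 1 ≤ d) : d ≤ 2 ^ (d - 1) := by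
  have := Nat.lt_two_pow_self (n := d - 1)
  omega

lemma aux_key (d m : ℕ) (hd : 1 ≤ d) (hm : 1 ≤ m) :
    (2 * (m : ℝ) + 3) ^ d - (2 * (m : ℝ) - 1) ^ d ≤ 10 ^ d * (m : ℝ) ^ (d - 1) := by
  have hm1 : (1 : ℝ) ≤ (m : ℝ) := by exact_mod_cast hm
  have hb : (0 : ℝ) ≤ 2 * (m : ℝ) - 1 := by linarith
  have hab : 2 * (m : ℝ) - 1 ≤ 2 * (m : ℝ) + 3 := by linarith
  have h1 := aux_pow_sub_pow (2 * (m : ℝ) + 3) (2 * (m : ℝ) - 1) hb hab d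
  have h2 : (2 * (m : ℝ) + 3) ≤ 5 * m := by linarith
  have h3 : (2 * (m : ℝ) + 3) ^ (d - 1) ≤ (5 * (m : ℝ)) ^ (d - 1) :=
    pow_le_pow_left₀ (by linarith) h2 _
  have h4 : (d : ℝ) ≤ 2 ^ (d - 1) := by exact_mod_cast aux_nat_le_pow d hd
  have h10 : (10 : ℝ) ^ d = 10 * (2 ^ (d-1) * 5 ^ (d-1)) := by
    rw [← mul_pow]
    norm_num
    rw [← pow_succ']
    congr 1
    omega
  calc (2 * (m : ℝ) + 3) ^ d - (2 * (m : ℝ) - 1) ^ d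
      ≤ d * (2*(m:ℝ)+3 - (2*(m:ℝ)-1)) * (2 * (m : ℝ) + 3) ^ (d - 1) := h1
    _ = 4 * d * (2 * (m : ℝ) + 3) ^ (d - 1) := by ring
    _ ≤ 4 * (2 ^ (d-1)) * ((5 * (m : ℝ)) ^ (d - 1)) := by
        apply mul_le_mul (by linarith) h3 (by positivity) (by positivity)
    _ = 4 * (2 ^ (d-1) * 5 ^ (d-1)) * (m:ℝ) ^ (d-1) := by rw [mul_pow]; ring
    _ ≤ 10 ^ d * (m : ℝ) ^ (d - 1) := by
        rw [h10]
        apply mul_le_mul_of_nonneg_right _ (by positivity)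
        have : (0:ℝ) ≤ 2 ^ (d-1) * 5 ^ (d-1) := by positivity
        linarith

lemma aux_packing {d : ℕ} (hd : 1 ≤ d) {δ : ℝ} (hδ : 0 < δ) {ι : Type*} [DecidableEq ι]
    (s : Finset ι) (y : ι → EuclideanSpace ℝ (Fin d)) (c : EuclideanSpace ℝ (Fin d))
    (hsep : ∀ i ∈ s, ∀ j ∈ s, i ≠ j → δ ≤ dist (y i) (y j))
    {m : ℕ} (hm : 1 ≤ m)
    (hlo : ∀ j ∈ s, (m : ℝ) * δ ≤ dist c (y j))
    (hhi : ∀ j ∈ s, dist c (y j) ≤ ((m : ℝ) + 1) * δ) :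
    (s.card : ℝ) ≤ (2 * (m : ℝ) + 3) ^ d - (2 * (m : ℝ) - 1) ^ d := by
  have hm1 : (1 : ℝ) ≤ (m : ℝ) := by exact_mod_cast hm
  have hdim : finrank ℝ (EuclideanSpace ℝ (Fin d)) = d := finrank_euclideanSpace_fin
  have hnt : Nontrivial (EuclideanSpace ℝ (Fin d)) :=
    nontrivial_of_finrank_pos (R := ℝ) (by omega : 0 < finrank ℝ (EuclideanSpace ℝ (Fin d)))
  set r : ℝ := δ / 2 with hr
  have hrpos : 0 < r := by positivity
  set v : ℝ≥0∞ := volume (ball (0 : EuclideanSpace ℝ (Fin d)) 1) with hv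
  have hvpos : 0 < v := measure_ball_pos _ _ one_pos
  have hvne : v ≠ ⊤ := measure_ball_lt_top.ne
  have hdisj : (s : Set ι).PairwiseDisjoint (fun j => ball (y j) r) := by
    intro i hi j hj hij
    exact ball_disjoint_ball (by
      have := hsep i hi j hj hij
      rw [hr]; linarith)
  have hsum : ∑ j ∈ s, volume (ball (y j) r) = volume (⋃ j ∈ s, ball (y j) r) :=
    (measure_biUnion_finset hdisj fun j _ => measurableSet_ball).symm
  set A : ℝ := (m : ℝ) * δ - r with hA
  set B : ℝ := ((m : ℝ) + 1) * δ + r with hB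
  have hApos : 0 ≤ A := by rw [hA, hr]; nlinarith
  have hBpos : 0 ≤ B := by rw [hB, hr]; nlinarith
  have hsub : (⋃ j ∈ s, ball (y j) r) ⊆ closedBall c B := by
    intro z hz
    simp only [Set.mem_iUnion] at hz
    obtain ⟨j, hj, hzj⟩ := hz
    rw [mem_closedBall]
    calc dist z c ≤ dist z (y j) + dist (y j) c := dist_triangle _ _ _
      _ ≤ r + ((m:ℝ)+1) * δ := by
          have h1 := hhi j hj
          have h2 := mem_ball.mp hzj
          rw [dist_comm (y j) c]
          linarith
      _ = B := by rw [hB]; ring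
  have hdisj2 : Disjoint (ball c A) (⋃ j ∈ s, ball (y j) r) := by
    rw [Set.disjoint_iUnion₂_right]
    intro j hj
    apply ball_disjoint_ball
    have := hlo j hj
    rw [hA]; linarith
  have hmeas : volume (ball c A) + ∑ j ∈ s, volume (ball (y j) r) ≤ volume (closedBall c B) := by
    rw [hsum, ← measure_union hdisj2 (MeasurableSet.biUnion s.countable_toSet
      fun j _ => measurableSet_ball)]
    apply measure_mono
    apply Set.union_subset _ hsub
    intro z hz
    rw [mem_closedBall]
    have h1 := mem_ball.mp hz
    rw [hB]
    rw [hA] at h1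
    have h2 : dist z c < (m:ℝ) * δ - r := by rwa [dist_comm] at h1
    nlinarith
  have hballj : ∀ j ∈ s, volume (ball (y j) r) = ENNReal.ofReal (r ^ d) * v := by
    intro j _
    rw [hv, Measure.addHaar_ball volume (y j) hrpos.le, hdim]
  have hballc : volume (ball c A) = ENNReal.ofReal (A ^ d) * v := by
    rw [hv, Measure.addHaar_ball volume c hApos, hdim]
  have hballB : volume (closedBall c B) = ENNReal.ofReal (B ^ d) * v := by
    rw [hv, Measure.addHaar_closedBall volume c hBpos, hdim]
  rw [Finset.sum_congr rfl hballj, Finset.sum_const, hballc, hballB, nsmul_eq_mul] at hmeas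
  have hx1 : ENNReal.ofReal (A ^ d) * v ≠ ⊤ := (ENNReal.mul_lt_top ofReal_lt_top hvne.lt_top).ne
  have hx2 : (s.card : ℝ≥0∞) * (ENNReal.ofReal (r ^ d) * v) ≠ ⊤ := by
    apply ne_of_lt
    exact ENNReal.mul_lt_top (natCast_lt_top _) (ENNReal.mul_lt_top ofReal_lt_top hvne.lt_top)
  have hx3 : ENNReal.ofReal (B ^ d) * v ≠ ⊤ := (ENNReal.mul_lt_top ofReal_lt_top hvne.lt_top).ne
  have hreal := ENNReal.toReal_mono hx3 hmeas
  rw [ENNReal.toReal_add hx1 hx2, ENNReal.toReal_mul, ENNReal.toReal_mul, ENNReal.toReal_mul,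
    ENNReal.toReal_mul, ENNReal.toReal_natCast, ENNReal.toReal_ofReal (by positivity),
    ENNReal.toReal_ofReal (by positivity), ENNReal.toReal_ofReal (by positivity)] at hreal
  set vr : ℝ := v.toReal with hvr
  have hvrpos : 0 < vr := ENNReal.toReal_pos hvpos.ne' hvne
  have hBA : B = (2 * (m:ℝ) + 3) * r := by rw [hB, hr]; ring
  have hAA : A = (2 * (m:ℝ) - 1) * r := by rw [hA, hr]; ring
  rw [hBA, hAA, mul_pow, mul_pow] at hreal
  have hrd : 0 < r ^ d * vr := by positivity
  rw [← mul_le_mul_iff_of_pos_right hrd]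
  nlinarith [hreal, hrd]

lemma aux_gershgorin {N : ℕ} (A : Matrix (Fin N) (Fin N) ℝ) (hA : A.IsHermitian) (i : Fin N) :
    ∃ k, |hA.eigenvalues i - A k k| ≤ ∑ j ∈ Finset.univ.erase k, ‖A k j‖ := by
  have hnz : (⇑(hA.eigenvectorBasis i) : Fin N → ℝ) ≠ 0 := by
    intro h
    have : hA.eigenvectorBasis i = 0 := by
      ext j
      exact congrFun h j
    exact hA.eigenvectorBasis.toBasis.ne_zero i (by simpa using this)
  have hev : Module.End.HasEigenvalue (Matrix.toLin' A) (hA.eigenvalues i) := by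
    apply Module.End.hasEigenvalue_of_hasEigenvector (x := ⇑(hA.eigenvectorBasis i))
    refine ⟨Module.End.mem_eigenspace_iff.2 ?_, hnz⟩
    rw [Matrix.toLin'_apply]
    exact hA.mulVec_eigenvectorBasis i
  obtain ⟨k, hk⟩ := eigenvalue_mem_ball hev
  refine ⟨k, ?_⟩
  rw [Metric.mem_closedBall, Real.dist_eq] at hk
  exact hk

lemma aux_rowsum (d : ℕ) (hd : 1 ≤ d) (δ : ℝ) (hδ : 0 < δ)
    (g : ℝ → ℝ) (hg_nonneg : ∀ t, 0 ≤ g t) (hg_mono : AntitoneOn g (Set.Ici 0))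
    (hg_sum : Summable fun m : ℕ => ((m : ℝ) + 1) ^ (d - 1) * g (((m : ℝ) + 1) * δ))
    (N : ℕ) (x : Fin N → EuclideanSpace ℝ (Fin d))
    (hsep : ∀ i j, i ≠ j → δ ≤ ‖x i - x j‖) (k : Fin N) :
    ∑ j ∈ Finset.univ.erase k, g ‖x k - x j‖ ≤
      10 ^ d * ∑' m : ℕ, ((m : ℝ) + 1) ^ (d - 1) * g (((m : ℝ) + 1) * δ) := by
  classical
  set D : Fin N → ℝ := fun j => ‖x k - x j‖ with hD
  have hdist : ∀ j, dist (x k) (x j) = D j := fun j => dist_eq_norm _ _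
  set φ : Fin N → ℕ := fun j => ⌊D j / δ⌋₊ with hφ
  have hDpos : ∀ j ∈ Finset.univ.erase k, δ ≤ D j := by
    intro j hj
    exact hsep k j (Ne.symm (Finset.ne_of_mem_erase hj))
  have hφ1 : ∀ j ∈ Finset.univ.erase k, 1 ≤ φ j := by
    intro j hj
    apply Nat.le_floor
    rw [Nat.cast_one, le_div_iff₀ hδ, one_mul]
    exact hDpos j hj
  have hφlo : ∀ j ∈ Finset.univ.erase k, (φ j : ℝ) * δ ≤ D j := by
    intro j hj
    have h1 : (φ j : ℝ) ≤ D j / δ := Nat.floor_le (by positivity)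
    calc (φ j : ℝ) * δ ≤ (D j / δ) * δ := by nlinarith
      _ = D j := by field_simp
  have hφhi : ∀ j, D j < ((φ j : ℝ) + 1) * δ := by
    intro j
    rcases le_or_gt 0 (D j) with h | h
    · have h1 : D j / δ < (φ j : ℝ) + 1 := Nat.lt_floor_add_one _
      calc D j = (D j / δ) * δ := by field_simp
        _ < ((φ j : ℝ) + 1) * δ := by nlinarith
    · calc D j < 0 := h
        _ ≤ _ := by positivity
  set t : Finset ℕ := (Finset.univ.erase k).image φ with ht
  have hmaps : ∀ j ∈ Finset.univ.erase k, φ j ∈ t := fun j hj => Finset.mem_image_of_mem φ hj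
  rw [← Finset.sum_fiberwise_of_maps_to hmaps (fun j => g (D j))]
  have ht1 : ∀ m ∈ t, 1 ≤ m := by
    intro m hm
    obtain ⟨j, hj, rfl⟩ := Finset.mem_image.mp hm
    exact hφ1 j hj
  -- bound each fiber
  have hfiber : ∀ m ∈ t,
      ∑ j ∈ (Finset.univ.erase k).filter (fun j => φ j = m), g (D j) ≤
        10 ^ d * ((m : ℝ) ^ (d - 1) * g ((m : ℝ) * δ)) := by
    intro m hm
    have hm1 := ht1 m hm
    set S := (Finset.univ.erase k).filter (fun j => φ j = m) with hS
    have hmem : ∀ j ∈ S, j ∈ Finset.univ.erase k ∧ φ j = m := by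
      intro j hj
      exact ⟨Finset.mem_of_mem_filter j hj, (Finset.mem_filter.mp hj).2⟩
    have hlo : ∀ j ∈ S, (m : ℝ) * δ ≤ dist (x k) (x j) := by
      intro j hj
      obtain ⟨hj1, hj2⟩ := hmem j hj
      rw [hdist, ← hj2]
      exact hφlo j hj1
    have hhi : ∀ j ∈ S, dist (x k) (x j) ≤ ((m : ℝ) + 1) * δ := by
      intro j hj
      obtain ⟨hj1, hj2⟩ := hmem j hj
      rw [hdist, ← hj2]
      exact (hφhi j).le
    have hsepS : ∀ i ∈ S, ∀ j ∈ S, i ≠ j → δ ≤ dist (x i) (x j) := by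
      intro i _ j _ hij
      rw [dist_eq_norm]
      exact hsep i j hij
    have hcard : (S.card : ℝ) ≤ 10 ^ d * (m : ℝ) ^ (d - 1) :=
      (aux_packing hd hδ S x (x k) hsepS hm1 hlo hhi).trans (aux_key d m hd hm1)
    have hterm : ∀ j ∈ S, g (D j) ≤ g ((m : ℝ) * δ) := by
      intro j hj
      obtain ⟨hj1, hj2⟩ := hmem j hj
      apply hg_mono (Set.mem_Ici.mpr (by positivity))
        (Set.mem_Ici.mpr (le_trans hδ.le (hDpos j hj1)))
      rw [← hj2]
      exact hφlo j hj1
    calc ∑ j ∈ S, g (D j) ≤ ∑ j ∈ S, g ((m : ℝ) * δ) := Finset.sum_le_sum hterm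
      _ = S.card * g ((m : ℝ) * δ) := by rw [Finset.sum_const, nsmul_eq_mul]
      _ ≤ 10 ^ d * (m : ℝ) ^ (d - 1) * g ((m : ℝ) * δ) := by
          apply mul_le_mul_of_nonneg_right hcard (hg_nonneg _)
      _ = 10 ^ d * ((m : ℝ) ^ (d - 1) * g ((m : ℝ) * δ)) := by ring
  calc ∑ m ∈ t, ∑ j ∈ (Finset.univ.erase k).filter (fun j => φ j = m), g (D j)
      ≤ ∑ m ∈ t, 10 ^ d * ((m : ℝ) ^ (d - 1) * g ((m : ℝ) * δ)) := Finset.sum_le_sum hfiber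
    _ = 10 ^ d * ∑ m ∈ t, ((m : ℝ) ^ (d - 1) * g ((m : ℝ) * δ)) := by
        rw [Finset.mul_sum]
    _ ≤ 10 ^ d * ∑' m : ℕ, ((m : ℝ) + 1) ^ (d - 1) * g (((m : ℝ) + 1) * δ) := by
        apply mul_le_mul_of_nonneg_left _ (by positivity)
        -- reindex t by m ↦ m - 1
        have hinj : Set.InjOn (fun m => m - 1) t := by
          intro a ha b hb hab
          have := ht1 a ha
          have := ht1 b hb
          simp only at hab
          omega
        have hre : ∑ m ∈ t, ((m : ℝ) ^ (d - 1) * g ((m : ℝ) * δ)) =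
            ∑ m ∈ t.image (fun m => m - 1),
              (((m : ℕ) : ℝ) + 1) ^ (d - 1) * g ((((m : ℕ) : ℝ) + 1) * δ) := by
          rw [Finset.sum_image (fun a ha b hb hab => hinj ha hb hab)]
          apply Finset.sum_congr rfl
          intro m hm
          have hm1 := ht1 m hm
          have hc : ((m - 1 : ℕ) : ℝ) + 1 = (m : ℝ) := by
            have : ((m - 1 : ℕ) : ℝ) = (m : ℝ) - 1 := by
              push_cast [Nat.cast_sub hm1]; ring
            rw [this]; ring
          rw [hc]
        rw [hre]
        exact Summable.sum_le_tsum _ (fun m _ => mul_nonneg (by positivity) (hg_nonneg _)) hg_sum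

/-- For a nonincreasing `g : [0,∞) → [0,∞)` and a `δ`-separated family
`x₁, …, x_N` in `ℝ^d`, every eigenvalue of the matrix `Φ_{ij} = g(‖x_i − x_j‖)` is at least
`g(0) − 10^d ∑_{m≥1} m^{d−1} g(mδ)`.  In particular, if `10^d ∑_{m≥1} m^{d−1} g(mδ) < g(0)`
then `Φ` is positive definite, with smallest eigenvalue bounded below independently of `N`. -/
theorem eigenvalue_lower_bound_of_separated
    (d : ℕ) (hd : 1 ≤ d) (δ : ℝ) (hδ : 0 < δ)
    (g : ℝ → ℝ) (hg_nonneg : ∀ t, 0 ≤ g t) (hg_mono : AntitoneOn g (Set.Ici 0))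
    (hg_sum : Summable fun m : ℕ => ((m : ℝ) + 1) ^ (d - 1) * g (((m : ℝ) + 1) * δ))
    (N : ℕ) (x : Fin N → EuclideanSpace ℝ (Fin d))
    (hsep : ∀ i j, i ≠ j → δ ≤ ‖x i - x j‖)
    (Φ : Matrix (Fin N) (Fin N) ℝ)
    (hΦdef : Φ = Matrix.of fun i j => g ‖x i - x j‖)
    (hΦ : Φ.IsHermitian) :
    (∀ i, g 0 - 10 ^ d * (∑' m : ℕ, ((m : ℝ) + 1) ^ (d - 1) * g (((m : ℝ) + 1) * δ)) ≤
        hΦ.eigenvalues i) ∧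
      (10 ^ d * (∑' m : ℕ, ((m : ℝ) + 1) ^ (d - 1) * g (((m : ℝ) + 1) * δ)) < g 0 →
        Φ.PosDef) := by
  set T : ℝ := ∑' m : ℕ, ((m : ℝ) + 1) ^ (d - 1) * g (((m : ℝ) + 1) * δ) with hT
  have hΦapp : ∀ i j, Φ i j = g ‖x i - x j‖ := by
    intro i j; rw [hΦdef]; rfl
  have hΦdiag : ∀ i, Φ i i = g 0 := by
    intro i; rw [hΦapp, sub_self, norm_zero]
  have hrow : ∀ k, ∑ j ∈ Finset.univ.erase k, ‖Φ k j‖ ≤ 10 ^ d * T := by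
    intro k
    have : ∑ j ∈ Finset.univ.erase k, ‖Φ k j‖ =
        ∑ j ∈ Finset.univ.erase k, g ‖x k - x j‖ := by
      apply Finset.sum_congr rfl
      intro j _
      rw [hΦapp, Real.norm_of_nonneg (hg_nonneg _)]
    rw [this]
    exact aux_rowsum d hd δ hδ g hg_nonneg hg_mono hg_sum N x hsep k
  constructor
  · intro i
    obtain ⟨k, hk⟩ := aux_gershgorin Φ hΦ i
    rw [hΦdiag k] at hk
    have h1 := (abs_le.mp (hk.trans (hrow k))).1
    linarith
  · intro hlt
    set c : ℝ := g 0 - 10 ^ d * T with hc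
    have hcpos : 0 < c := by rw [hc]; linarith
    set Δ : Matrix (Fin N) (Fin N) ℝ := Matrix.diagonal (fun _ => c) with hΔ
    have hΔpd : Δ.PosDef := Matrix.PosDef.diagonal (fun _ => hcpos)
    set B : Matrix (Fin N) (Fin N) ℝ := Φ - Δ with hB
    have hBh : B.IsHermitian := hΦ.sub (Matrix.isHermitian_diagonal _)
    have hBps : B.PosSemidef := by
      apply hBh.posSemidef_iff_eigenvalues_nonneg.mpr
      intro i
      show (0:ℝ) ≤ hBh.eigenvalues i
      obtain ⟨k, hk⟩ := aux_gershgorin B hBh i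
      have hBdiag : B k k = 10 ^ d * T := by
        rw [hB, Matrix.sub_apply, hΔ, Matrix.diagonal_apply_eq, hΦdiag, hc]; ring
      have hBrow : ∑ j ∈ Finset.univ.erase k, ‖B k j‖ = ∑ j ∈ Finset.univ.erase k, ‖Φ k j‖ := by
        apply Finset.sum_congr rfl
        intro j hj
        rw [hB, Matrix.sub_apply, hΔ, Matrix.diagonal_apply_ne' _ (Finset.ne_of_mem_erase hj),
          sub_zero]
      rw [hBdiag, hBrow] at hk
      have h1 := (abs_le.mp (hk.trans (hrow k))).1
      linarith
    have : Φ = B + Δ := by rw [hB, sub_add_cancel]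
    rw [this]
    exact Matrix.PosDef.posSemidef_add hBps hΔpd
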